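/- Laplace's method (boundary case, nonvanishing derivative): let ψ : [a,b) → ℝ be continuous at a with ψ(a) ≠ 0, and φ : [a,b) → ℝ be C² with φ' < 0 on (a,b) and φ'(a) < 0. Assume f(ε) := ∫_a^b exp(φ(x)/ε) ψ(x) dx is finite for small ε > 0. Then f(ε) ~ (ε/|φ'(a)|) exp(φ(a)/ε) ψ(a) as ε → 0⁺. -/

import Mathlib

open MeasureTheory Real Filter Set

lemma lap_exp_int (m a η : ℝ) (hm : m ≠ 0) (hη : 0 ≤ η) :
    ∫ x in Icc a (a+η), Real.exp (m*(x-a)) = (Real.exp (m*η) - 1)/m := by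
  rw [integral_Icc_eq_integral_Ioc, ← intervalIntegral.integral_of_le (by linarith : a ≤ a+η)]
  have h : ∀ x ∈ Set.uIcc a (a+η), HasDerivAt (fun y => Real.exp (m*(y-a))/m)
      (Real.exp (m*(x-a))) x := by
    intro x _
    have h := (((hasDerivAt_id x).sub_const a).const_mul m).exp.div_const m
    simpa [mul_comm, mul_div_assoc, mul_div_cancel_left₀ _ hm] using h
  rw [intervalIntegral.integral_eq_sub_of_hasDerivAt h
    ((Real.continuous_exp.comp (by fun_prop)).intervalIntegrable _ _)]
  simp [sub_div]

lemma lap_exp_tendsto {c : ℝ} (hc : c < 0) :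
    Tendsto (fun ε : ℝ => Real.exp (c/ε)) (nhdsWithin 0 (Ioi 0)) (nhds 0) := by
  have h : Tendsto (fun ε : ℝ => c * ε⁻¹) (nhdsWithin 0 (Ioi 0)) atBot :=
    (tendsto_const_mul_atBot_of_neg hc).2 tendsto_inv_nhdsGT_zero
  have h2 := Real.tendsto_exp_atBot.comp h
  refine h2.congr fun ε => ?_
  simp [Function.comp, div_eq_mul_inv]

lemma lap_exp_div_tendsto {κ : ℝ} (hκ : 0 < κ) :
    Tendsto (fun ε : ℝ => Real.exp (-κ/ε)/ε) (nhdsWithin 0 (Ioi 0)) (nhds 0) := by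
  have h1 : Tendsto (fun t : ℝ => κ * t) atTop atTop :=
    Tendsto.const_mul_atTop hκ tendsto_id
  have h2 : Tendsto (fun t : ℝ => (κ*t)^1 * Real.exp (-(κ*t))) atTop (nhds 0) :=
    (Real.tendsto_pow_mul_exp_neg_atTop_nhds_zero 1).comp h1
  have h3 : Tendsto (fun t : ℝ => t * Real.exp (-(κ*t))) atTop (nhds 0) := by
    have := h2.const_mul (1/κ)
    rw [mul_zero] at this
    refine this.congr fun t => ?_
    field_simp
  have h4 := h3.comp tendsto_inv_nhdsGT_zero
  refine h4.congr fun ε => ?_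
  simp only [Function.comp]
  rw [div_eq_mul_inv, div_eq_mul_inv, mul_comm]
  ring_nf

set_option maxHeartbeats 1600000 in
lemma lap_aux (a : ℝ) (S : Set ℝ)
    (hS : S = Ici a ∨ ∃ b' : ℝ, a < b' ∧ S = Ico a b')
    (φ ψ : ℝ → ℝ)
    (hψ : ContinuousWithinAt ψ (Ici a) a) (hψa : 0 < ψ a)
    (hφ : ContDiffOn ℝ 2 φ S)
    (hφ' : ∀ x ∈ interior S, deriv φ x < 0)
    (hφ'a : deriv φ a < 0)
    (hInt : ∀ᶠ ε in nhdsWithin (0 : ℝ) (Ioi 0),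
      IntegrableOn (fun x => Real.exp (φ x / ε) * ψ x) S) :
    Tendsto (fun ε : ℝ => (∫ x in S, Real.exp ((φ x - φ a) / ε) * ψ x) / ε)
      (nhdsWithin (0 : ℝ) (Ioi 0)) (nhds (ψ a / |deriv φ a|)) := by
  obtain ⟨hSmeas, hSconv, hSuniq, haS, hSsub, η₀, hη₀, hIccS⟩ :
      MeasurableSet S ∧ Convex ℝ S ∧ UniqueDiffOn ℝ S ∧ a ∈ S ∧ S ⊆ Ici a ∧
        ∃ η₀ > 0, Icc a (a+η₀) ⊆ S := by
    rcases hS with rfl | ⟨b', hb', rfl⟩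
    · exact ⟨measurableSet_Ici, convex_Ici _, uniqueDiffOn_Ici _, self_mem_Ici, subset_rfl,
        1, one_pos, Icc_subset_Ici_self⟩
    · refine ⟨measurableSet_Ico, convex_Ico _ _, uniqueDiffOn_Ico _ _, ⟨le_rfl, hb'⟩,
        Ico_subset_Ici_self, (b'-a)/2, by linarith, fun x hx => ⟨hx.1, ?_⟩⟩
      have h1 := hx.1
      have h2 := hx.2
      simp only [mem_Icc] at *
      linarith
  have hL : deriv φ a < 0 := hφ'a
  have habs : |deriv φ a| = -deriv φ a := abs_of_neg hL
  have hLne : deriv φ a ≠ 0 := hL.ne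
  have hdiffInt : ∀ x ∈ interior S, DifferentiableAt ℝ φ x := fun x hx =>
    differentiableAt_of_deriv_ne_zero (hφ' x hx).ne
  have hφcont : ContinuousOn φ S := hφ.continuousOn
  have hanti : StrictAntiOn φ S := strictAntiOn_of_deriv_neg hSconv hφcont hφ'
  have hdc : ContinuousOn (derivWithin φ S) S :=
    hφ.continuousOn_derivWithin hSuniq (by norm_num)
  have hdwa : derivWithin φ S a = deriv φ a :=
    (differentiableAt_of_deriv_ne_zero hLne).derivWithin (hSuniq a haS)
  -- integrability of the shifted integrand
  have hInt' : ∀ᶠ ε in nhdsWithin (0 : ℝ) (Ioi 0),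
      IntegrableOn (fun x => Real.exp ((φ x - φ a) / ε) * ψ x) S := by
    filter_upwards [hInt] with ε hIε
    have heq : (fun x => Real.exp ((φ x - φ a) / ε) * ψ x)
        = fun x => Real.exp (-(φ a)/ε) * (Real.exp (φ x / ε) * ψ x) := by
      funext x
      have harg : (φ x - φ a)/ε = -(φ a)/ε + φ x/ε := by ring
      rw [harg, Real.exp_add, mul_assoc]
    rw [heq]
    exact hIε.const_mul _
  obtain ⟨ε₀, hIntε₀, hε₀⟩ := (hInt'.and self_mem_nhdsWithin).exists
  have hε₀pos : (0:ℝ) < ε₀ := hε₀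
  set C := ∫ x in S, Real.exp ((φ x - φ a)/ε₀) * |ψ x| with hCdef
  have hCint : IntegrableOn (fun x => Real.exp ((φ x - φ a)/ε₀) * |ψ x|) S := by
    have heq : (fun x => Real.exp ((φ x - φ a)/ε₀) * |ψ x|)
        = fun x => |Real.exp ((φ x - φ a)/ε₀) * ψ x| := by
      funext x
      rw [abs_mul, abs_of_pos (Real.exp_pos _)]
    rw [heq]
    exact hIntε₀.abs
  have hC0 : 0 ≤ C := setIntegral_nonneg hSmeas fun x _ => by positivity
  have key : ∀ p q : ℝ, p < ψ a / |deriv φ a| → ψ a / |deriv φ a| < q →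
      ∀ᶠ ε in nhdsWithin (0 : ℝ) (Ioi 0),
        p < (∫ x in S, Real.exp ((φ x - φ a) / ε) * ψ x) / ε ∧
        (∫ x in S, Real.exp ((φ x - φ a) / ε) * ψ x) / ε < q := by
    intro p q hp hq
    have hnL : 0 < -deriv φ a := neg_pos.2 hL
    -- choose δ
    have hF0 : (1-(0:ℝ))*ψ a/((1+0)*(-deriv φ a)) = ψ a/|deriv φ a| := by
      rw [habs]; norm_num
    have hG0 : (1+(0:ℝ))*ψ a/((1-0)*(-deriv φ a)) = ψ a/|deriv φ a| := by
      rw [habs]; norm_num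
    have hFc : ContinuousAt (fun δ : ℝ => (1-δ)*ψ a/((1+δ)*(-deriv φ a))) 0 := by
      apply ContinuousAt.div (by fun_prop) (by fun_prop)
      norm_num
      exact hLne
    have hGc : ContinuousAt (fun δ : ℝ => (1+δ)*ψ a/((1-δ)*(-deriv φ a))) 0 := by
      apply ContinuousAt.div (by fun_prop) (by fun_prop)
      norm_num
      exact hLne
    have h1 : ∀ᶠ δ in nhds (0:ℝ), p < (1-δ)*ψ a/((1+δ)*(-deriv φ a)) :=
      hFc.eventually (eventually_gt_nhds (show p < (1-(0:ℝ))*ψ a/((1+0)*(-deriv φ a)) by rw [hF0]; exact hp))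
    have h2 : ∀ᶠ δ in nhds (0:ℝ), (1+δ)*ψ a/((1-δ)*(-deriv φ a)) < q :=
      hGc.eventually (eventually_lt_nhds (show (1+(0:ℝ))*ψ a/((1-0)*(-deriv φ a)) < q by rw [hG0]; exact hq))
    have h3 : ∀ᶠ δ in nhds (0:ℝ), δ < 1 := eventually_lt_nhds one_pos
    obtain ⟨δ, ⟨⟨hFp, hGq⟩, hδ1⟩, hδ0⟩ :=
      ((((h1.and h2).and h3).filter_mono nhdsWithin_le_nhds).and
        (self_mem_nhdsWithin : Ioi (0:ℝ) ∈ nhdsWithin 0 (Ioi 0))).exists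
    have hδ0' : (0:ℝ) < δ := hδ0
    set c₁ := (1+δ)*deriv φ a with hc₁def
    set c₂ := (1-δ)*deriv φ a with hc₂def
    have hc₁ : c₁ < 0 := mul_neg_of_pos_of_neg (by linarith) hL
    have hc₂ : c₂ < 0 := mul_neg_of_pos_of_neg (by linarith) hL
    have hc₁L : c₁ < deriv φ a := by rw [hc₁def]; nlinarith
    have hc₂L : deriv φ a < c₂ := by rw [hc₂def]; nlinarith
    -- choose η
    have hev1 : ∀ᶠ x in nhdsWithin a (Ici a),
        ψ x ∈ Ioo ((1-δ)*ψ a) ((1+δ)*ψ a) :=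
      hψ (Ioo_mem_nhds (by nlinarith) (by nlinarith))
    have hev1' : ∀ᶠ x in nhdsWithin a S, ψ x ∈ Ioo ((1-δ)*ψ a) ((1+δ)*ψ a) :=
      hev1.filter_mono (nhdsWithin_mono a hSsub)
    have hev2 : ∀ᶠ x in nhdsWithin a S, derivWithin φ S x ∈ Ioo c₁ c₂ :=
      (hdc a haS) (by rw [hdwa]; exact Ioo_mem_nhds hc₁L hc₂L)
    have hev := hev1'.and hev2
    rw [eventually_nhdsWithin_iff, Metric.eventually_nhds_iff] at hev
    obtain ⟨r, hr, hball⟩ := hev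
    set η := min (r/2) η₀ with hηdef
    have hη : 0 < η := lt_min (by linarith) hη₀
    have hIcc_sub : Icc a (a+η) ⊆ S :=
      (Icc_subset_Icc_right (by have := min_le_right (r/2) η₀; linarith)).trans hIccS
    have hηprops : ∀ x ∈ Icc a (a+η),
        (ψ x ∈ Ioo ((1-δ)*ψ a) ((1+δ)*ψ a)) ∧ derivWithin φ S x ∈ Ioo c₁ c₂ := by
      intro x hx
      have hd : dist x a < r := by
        rw [Real.dist_eq, abs_of_nonneg (by linarith [hx.1])]
        have h := min_le_left (r/2) η₀
        have h2 := hx.2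
        simp only [mem_Icc] at *
        linarith
      exact hball hd (hIcc_sub hx)
    have hIooInt : Ioo a (a+η) ⊆ interior S :=
      interior_maximal (Ioo_subset_Icc_self.trans hIcc_sub) isOpen_Ioo
    have hderiv_bounds : ∀ x ∈ Ioo a (a+η), c₁ ≤ deriv φ x ∧ deriv φ x ≤ c₂ := by
      intro x hx
      have h := (hηprops x (Ioo_subset_Icc_self hx)).2
      rw [derivWithin_of_mem_nhds (mem_interior_iff_mem_nhds.1 (hIooInt hx))] at h
      exact ⟨h.1.le, h.2.le⟩
    -- bounds on φ x - φ a on Icc a (a+η)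
    have hmono : ∀ c : ℝ, (∀ x ∈ Ioo a (a+η), c ≤ deriv φ x) →
        ∀ x ∈ Icc a (a+η), c*(x-a) ≤ φ x - φ a := by
      intro c hc x hx
      have hg : MonotoneOn (fun y => φ y - c*y) (Icc a (a+η)) := by
        apply monotoneOn_of_deriv_nonneg (convex_Icc _ _)
        · exact (hφcont.mono hIcc_sub).sub (by fun_prop)
        · intro y hy
          rw [interior_Icc] at hy
          exact ((hdiffInt y (hIooInt hy)).sub (by fun_prop)).differentiableWithinAt
        · intro y hy
          rw [interior_Icc] at hy
          rw [deriv_fun_sub (hdiffInt y (hIooInt hy)) (by fun_prop : DifferentiableAt ℝ (fun y : ℝ => c * y) y)]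
          have hd : deriv (fun y : ℝ => c * y) y = c := by
            have hh := ((hasDerivAt_id y).const_mul c).deriv
            simpa using hh
          rw [hd]
          linarith [hc y hy]
      have h := hg (left_mem_Icc.2 (by linarith)) hx hx.1
      simp only at h
      linarith
    have hantib : ∀ c : ℝ, (∀ x ∈ Ioo a (a+η), deriv φ x ≤ c) →
        ∀ x ∈ Icc a (a+η), φ x - φ a ≤ c*(x-a) := by
      intro c hc x hx
      have hg : AntitoneOn (fun y => φ y - c*y) (Icc a (a+η)) := by
        apply antitoneOn_of_deriv_nonpos (convex_Icc _ _)
        · exact (hφcont.mono hIcc_sub).sub (by fun_prop)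
        · intro y hy
          rw [interior_Icc] at hy
          exact ((hdiffInt y (hIooInt hy)).sub (by fun_prop)).differentiableWithinAt
        · intro y hy
          rw [interior_Icc] at hy
          rw [deriv_fun_sub (hdiffInt y (hIooInt hy)) (by fun_prop : DifferentiableAt ℝ (fun y : ℝ => c * y) y)]
          have hd : deriv (fun y : ℝ => c * y) y = c := by
            have hh := ((hasDerivAt_id y).const_mul c).deriv
            simpa using hh
          rw [hd]
          linarith [hc y hy]
      have h := hg (left_mem_Icc.2 (by linarith)) hx hx.1
      simp only at h
      linarith
    have hφlow : ∀ x ∈ Icc a (a+η), c₁*(x-a) ≤ φ x - φ a :=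
      hmono c₁ (fun x hx => (hderiv_bounds x hx).1)
    have hφupp : ∀ x ∈ Icc a (a+η), φ x - φ a ≤ c₂*(x-a) :=
      hantib c₂ (fun x hx => (hderiv_bounds x hx).2)
    set κ := φ a - φ (a + η) with hκdef
    have haη : a + η ∈ S := hIcc_sub (right_mem_Icc.2 (by linarith))
    have hκpos : 0 < κ := sub_pos.2 (hanti haS haη (by linarith))
    have hφtail : ∀ x ∈ S, a + η ≤ x → φ x - φ a ≤ -κ := by
      intro x hxS hxge
      have hle : φ x ≤ φ (a + η) := by
        rcases hxge.eq_or_lt with h | h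
        · rw [← h]
        · exact (hanti haη hxS h).le
      rw [hκdef]; linarith
    -- limit functions
    set K := C * Real.exp (κ/ε₀) with hKdef
    have hK0 : 0 ≤ K := mul_nonneg hC0 (Real.exp_pos _).le
    have hlo_lim : Tendsto
        (fun ε : ℝ => (1-δ)*ψ a*(1 - Real.exp (c₁*η/ε))/(-c₁) - K * (Real.exp (-κ/ε)/ε))
        (nhdsWithin (0 : ℝ) (Ioi 0)) (nhds ((1-δ)*ψ a/(-c₁))) := by
      have t1 := (((lap_exp_tendsto (mul_neg_of_neg_of_pos hc₁ hη)).const_sub 1).const_mul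
        ((1-δ)*ψ a)).div_const (-c₁)
      have t2 := (lap_exp_div_tendsto hκpos).const_mul K
      have h := t1.sub t2
      simpa using h
    have hhi_lim : Tendsto
        (fun ε : ℝ => (1+δ)*ψ a*(1 - Real.exp (c₂*η/ε))/(-c₂) + K * (Real.exp (-κ/ε)/ε))
        (nhdsWithin (0 : ℝ) (Ioi 0)) (nhds ((1+δ)*ψ a/(-c₂))) := by
      have t1 := (((lap_exp_tendsto (mul_neg_of_neg_of_pos hc₂ hη)).const_sub 1).const_mul
        ((1+δ)*ψ a)).div_const (-c₂)
      have t2 := (lap_exp_div_tendsto hκpos).const_mul K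
      have h := t1.add t2
      simpa using h
    have hploc : p < (1-δ)*ψ a/(-c₁) := by
      have h : -c₁ = (1+δ)*(-deriv φ a) := by rw [hc₁def]; ring
      rw [h]; exact hFp
    have hqloc : (1+δ)*ψ a/(-c₂) < q := by
      have h : -c₂ = (1-δ)*(-deriv φ a) := by rw [hc₂def]; ring
      rw [h]; exact hGq
    have hev_lo := hlo_lim.eventually (eventually_gt_nhds hploc)
    have hev_hi := hhi_lim.eventually (eventually_lt_nhds hqloc)
    have hevε₀ : ∀ᶠ ε in nhdsWithin (0:ℝ) (Ioi 0), ε < ε₀ :=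
      (eventually_lt_nhds hε₀pos).filter_mono nhdsWithin_le_nhds
    filter_upwards [hInt', self_mem_nhdsWithin, hevε₀, hev_lo, hev_hi]
      with ε hI hεmem hεlt hplo hqhi
    have hεpos : (0:ℝ) < ε := hεmem
    have hεne : ε ≠ 0 := hεpos.ne'
    set f := fun x => Real.exp ((φ x - φ a)/ε) * ψ x with hfdef
    -- split the integral
    have hunion : S = Icc a (a+η) ∪ (S ∩ Ioi (a+η)) := by
      apply Subset.antisymm
      · intro x hxS
        by_cases hx : x ≤ a + η
        · exact Or.inl ⟨hSsub hxS, hx⟩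
        · exact Or.inr ⟨hxS, lt_of_not_ge hx⟩
      · rintro x (hx | hx)
        · exact hIcc_sub hx
        · exact hx.1
    have hdisj : Disjoint (Icc a (a+η)) (S ∩ Ioi (a+η)) :=
      Set.disjoint_left.2 fun x hx hx' => hx.2.not_gt hx'.2
    have hIm : IntegrableOn f (Icc a (a+η)) := hI.mono_set hIcc_sub
    have hIt : IntegrableOn f (S ∩ Ioi (a+η)) := hI.mono_set inter_subset_left
    have hsplit : ∫ x in S, f x = (∫ x in Icc a (a+η), f x) + ∫ x in S ∩ Ioi (a+η), f x := by
      conv_lhs => rw [hunion]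
      exact setIntegral_union hdisj (hSmeas.inter measurableSet_Ioi) hIm hIt
    -- exponential integral computations
    have hintc : ∀ c : ℝ, c < 0 →
        ∫ x in Icc a (a+η), Real.exp (c*(x-a)/ε) = (1 - Real.exp (c*η/ε))*ε/(-c) := by
      intro c hc
      have hm : c/ε ≠ 0 := div_ne_zero hc.ne hεne
      have heq : ∀ x : ℝ, c*(x-a)/ε = (c/ε)*(x-a) := fun x => by ring
      simp_rw [heq]
      rw [lap_exp_int (c/ε) a η hm hη.le]
      have h2 : (c/ε)*η = c*η/ε := by ring
      rw [h2]
      field_simp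
      ring
    -- main part: lower bound
    have hmainlow : ((1 - Real.exp (c₁*η/ε))*ε/(-c₁)) * ((1-δ)*ψ a) ≤
        ∫ x in Icc a (a+η), f x := by
      have hpt : ∀ x ∈ Icc a (a+η),
          Real.exp (c₁*(x-a)/ε) * ((1-δ)*ψ a) ≤ f x := by
        intro x hx
        have h1 : Real.exp (c₁*(x-a)/ε) ≤ Real.exp ((φ x - φ a)/ε) := by
          apply Real.exp_le_exp.2
          gcongr
          exact hφlow x hx
        have h2 : (1-δ)*ψ a ≤ ψ x := ((hηprops x hx).1).1.le
        exact mul_le_mul h1 h2 (by nlinarith) (Real.exp_pos _).le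
      have hIlow : IntegrableOn (fun x => Real.exp (c₁*(x-a)/ε) * ((1-δ)*ψ a))
          (Icc a (a+η)) := (Continuous.integrableOn_Icc (by fun_prop))
      have h := setIntegral_mono_on hIlow hIm measurableSet_Icc hpt
      rw [MeasureTheory.integral_mul_const, hintc c₁ hc₁] at h
      exact h
    -- main part: upper bound
    have hmainupp : (∫ x in Icc a (a+η), f x) ≤
        ((1 - Real.exp (c₂*η/ε))*ε/(-c₂)) * ((1+δ)*ψ a) := by
      have hpt : ∀ x ∈ Icc a (a+η),
          f x ≤ Real.exp (c₂*(x-a)/ε) * ((1+δ)*ψ a) := by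
        intro x hx
        have h1 : Real.exp ((φ x - φ a)/ε) ≤ Real.exp (c₂*(x-a)/ε) := by
          apply Real.exp_le_exp.2
          gcongr
          exact hφupp x hx
        have h2 : ψ x ≤ (1+δ)*ψ a := ((hηprops x hx).1).2.le
        have h3 : 0 ≤ ψ x := by nlinarith [((hηprops x hx).1).1]
        exact mul_le_mul h1 h2 h3 (Real.exp_pos _).le
      have hIupp : IntegrableOn (fun x => Real.exp (c₂*(x-a)/ε) * ((1+δ)*ψ a))
          (Icc a (a+η)) := (Continuous.integrableOn_Icc (by fun_prop))
      have h := setIntegral_mono_on hIm hIupp measurableSet_Icc hpt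
      rw [MeasureTheory.integral_mul_const, hintc c₂ hc₂] at h
      exact h
    -- tail bound
    have htail : |∫ x in S ∩ Ioi (a+η), f x| ≤ K * Real.exp (-κ/ε) := by
      have hptabs : ∀ x ∈ S ∩ Ioi (a+η),
          |f x| ≤ (Real.exp (κ/ε₀) * Real.exp (-κ/ε)) *
            (Real.exp ((φ x - φ a)/ε₀) * |ψ x|) := by
        rintro x ⟨hxS, hxgt⟩
        have hφx := hφtail x hxS (le_of_lt hxgt)
        have habsf : |f x| = Real.exp ((φ x - φ a)/ε) * |ψ x| := by
          rw [hfdef]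
          simp only
          rw [abs_mul, abs_of_pos (Real.exp_pos _)]
        rw [habsf]
        have hexp : Real.exp ((φ x - φ a)/ε)
            = Real.exp ((φ x - φ a)*(1/ε - 1/ε₀)) * Real.exp ((φ x - φ a)/ε₀) := by
          rw [← Real.exp_add]
          congr 1
          field_simp
          ring
        rw [hexp, mul_assoc]
        have hfrac : 0 ≤ 1/ε - 1/ε₀ := by
          have h := one_div_le_one_div_of_le hεpos hεlt.le
          linarith
        have hb2 : Real.exp ((φ x - φ a)*(1/ε - 1/ε₀))
            ≤ Real.exp (κ/ε₀) * Real.exp (-κ/ε) := by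
          rw [← Real.exp_add]
          apply Real.exp_le_exp.2
          have h : κ/ε₀ + -κ/ε = (-κ)*(1/ε - 1/ε₀) := by field_simp; ring
          rw [h]
          exact mul_le_mul_of_nonneg_right hφx hfrac
        exact mul_le_mul_of_nonneg_right hb2 (by positivity)
      have h1 : |∫ x in S ∩ Ioi (a+η), f x| ≤ ∫ x in S ∩ Ioi (a+η), |f x| := by
        simpa [Real.norm_eq_abs] using
          norm_integral_le_integral_norm (μ := volume.restrict (S ∩ Ioi (a+η))) f
      have h2 : (∫ x in S ∩ Ioi (a+η), |f x|) ≤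
          ∫ x in S ∩ Ioi (a+η), (Real.exp (κ/ε₀) * Real.exp (-κ/ε)) *
            (Real.exp ((φ x - φ a)/ε₀) * |ψ x|) :=
        setIntegral_mono_on hIt.abs
          ((hCint.mono_set inter_subset_left).const_mul _)
          (hSmeas.inter measurableSet_Ioi) hptabs
      have h3 : (∫ x in S ∩ Ioi (a+η), (Real.exp (κ/ε₀) * Real.exp (-κ/ε)) *
            (Real.exp ((φ x - φ a)/ε₀) * |ψ x|))
          = (Real.exp (κ/ε₀) * Real.exp (-κ/ε)) *
            ∫ x in S ∩ Ioi (a+η), Real.exp ((φ x - φ a)/ε₀) * |ψ x| :=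
        MeasureTheory.integral_const_mul _ _
      have h4 : (∫ x in S ∩ Ioi (a+η), Real.exp ((φ x - φ a)/ε₀) * |ψ x|) ≤ C := by
        rw [hCdef]
        exact setIntegral_mono_set hCint (ae_of_all _ fun x => by positivity)
          (HasSubset.Subset.eventuallyLE inter_subset_left)
      calc |∫ x in S ∩ Ioi (a+η), f x| ≤ ∫ x in S ∩ Ioi (a+η), |f x| := h1
        _ ≤ _ := h2
        _ = (Real.exp (κ/ε₀) * Real.exp (-κ/ε)) *
            ∫ x in S ∩ Ioi (a+η), Real.exp ((φ x - φ a)/ε₀) * |ψ x| := h3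
        _ ≤ (Real.exp (κ/ε₀) * Real.exp (-κ/ε)) * C :=
            mul_le_mul_of_nonneg_left h4 (by positivity)
        _ = K * Real.exp (-κ/ε) := by rw [hKdef]; ring
    -- assemble
    have htail' := abs_le.1 htail
    constructor
    · refine lt_of_lt_of_le hplo ?_
      rw [le_div_iff₀ hεpos]
      have heq1 : ((1-δ)*ψ a*(1 - Real.exp (c₁*η/ε))/(-c₁) - K * (Real.exp (-κ/ε)/ε)) * ε
          = ((1 - Real.exp (c₁*η/ε))*ε/(-c₁)) * ((1-δ)*ψ a) - K * Real.exp (-κ/ε) := by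
        field_simp
      rw [heq1, hsplit]
      linarith [htail'.1, hmainlow]
    · refine lt_of_le_of_lt ?_ hqhi
      rw [div_le_iff₀ hεpos]
      have heq2 : ((1+δ)*ψ a*(1 - Real.exp (c₂*η/ε))/(-c₂) + K * (Real.exp (-κ/ε)/ε)) * ε
          = ((1 - Real.exp (c₂*η/ε))*ε/(-c₂)) * ((1+δ)*ψ a) + K * Real.exp (-κ/ε) := by
        field_simp
      rw [heq2, hsplit]
      linarith [htail'.2, hmainupp]
  refine tendsto_order.2 ⟨fun p hp => ?_, fun q hq => ?_⟩
  · exact (key p (ψ a / |deriv φ a| + 1) hp (lt_add_one _)).mono fun ε h => h.1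
  · exact (key (ψ a / |deriv φ a| - 1) q (by linarith) hq).mono fun ε h => h.2

lemma lap_aux2 (a : ℝ) (S : Set ℝ)
    (hS : S = Ici a ∨ ∃ b' : ℝ, a < b' ∧ S = Ico a b')
    (φ ψ : ℝ → ℝ)
    (hψ : ContinuousWithinAt ψ (Ici a) a) (hψa : ψ a ≠ 0)
    (hφ : ContDiffOn ℝ 2 φ S)
    (hφ' : ∀ x ∈ interior S, deriv φ x < 0)
    (hφ'a : deriv φ a < 0)
    (hInt : ∀ᶠ ε in nhdsWithin (0 : ℝ) (Ioi 0),
      IntegrableOn (fun x => Real.exp (φ x / ε) * ψ x) S) :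
    Tendsto (fun ε : ℝ => (∫ x in S, Real.exp ((φ x - φ a) / ε) * ψ x) / ε)
      (nhdsWithin (0 : ℝ) (Ioi 0)) (nhds (ψ a / |deriv φ a|)) := by
  rcases hψa.lt_or_gt with hneg | hpos
  · have hInt2 : ∀ᶠ ε in nhdsWithin (0 : ℝ) (Ioi 0),
        IntegrableOn (fun x => Real.exp (φ x / ε) * (-ψ x)) S := by
      filter_upwards [hInt] with ε hIε
      have heq : (fun x => Real.exp (φ x / ε) * (-ψ x))
          = fun x => -(Real.exp (φ x / ε) * ψ x) := by
        funext x; ring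
      rw [heq]
      exact hIε.neg
    have h := lap_aux a S hS φ (fun x => -ψ x) hψ.neg (by simpa using hneg)
      hφ hφ' hφ'a hInt2
    have h2 := h.neg
    have heq2 : ∀ ε : ℝ, (∫ x in S, Real.exp ((φ x - φ a)/ε) * (-ψ x))
        = -∫ x in S, Real.exp ((φ x - φ a)/ε) * ψ x := by
      intro ε
      rw [← integral_neg]
      congr 1
      funext x
      ring
    have h3 : (fun ε : ℝ => -((∫ x in S, Real.exp ((φ x - φ a)/ε) * (-ψ x))/ε))
        = fun ε : ℝ => (∫ x in S, Real.exp ((φ x - φ a)/ε) * ψ x)/ε := by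
      funext ε
      rw [heq2 ε]
      ring
    have h4 : -((fun x => -ψ x) a / |deriv φ a|) = ψ a / |deriv φ a| := by
      simp [neg_div]
    rw [h3] at h2
    rw [h4] at h2
    exact h2
  · exact lap_aux a S hS φ ψ hψ hpos hφ hφ' hφ'a hInt

theorem laplace_method_boundary_linear (a : ℝ) (b : EReal) (hab : (a : EReal) < b)
    (φ ψ : ℝ → ℝ)
    (hψ : ContinuousWithinAt ψ (Ici a) a) (hψa : ψ a ≠ 0)
    (hφ : ContDiffOn ℝ 2 φ {x : ℝ | a ≤ x ∧ (x : EReal) < b})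
    (hφ' : ∀ x : ℝ, a < x → (x : EReal) < b → deriv φ x < 0)
    (hφ'a : deriv φ a < 0)
    (hInt : ∀ᶠ ε in nhdsWithin (0 : ℝ) (Ioi 0),
      IntegrableOn (fun x => Real.exp (φ x / ε) * ψ x) {x : ℝ | a ≤ x ∧ (x : EReal) < b}) :
    Tendsto
      (fun ε : ℝ =>
        (∫ x in {x : ℝ | a ≤ x ∧ (x : EReal) < b}, Real.exp (φ x / ε) * ψ x) /
          (ε / |deriv φ a| * Real.exp (φ a / ε) * ψ a))
      (nhdsWithin (0 : ℝ) (Ioi 0)) (nhds 1) := by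
  set S := {x : ℝ | a ≤ x ∧ (x : EReal) < b} with hSdef
  have hS : S = Ici a ∨ ∃ b' : ℝ, a < b' ∧ S = Ico a b' := by
    by_cases hb : b = ⊤
    · left
      ext x
      simp [hSdef, hb, mem_Ici]
    · right
      have hbot : b ≠ ⊥ := ((EReal.bot_lt_coe a).trans hab).ne'
      have hbeq : ((b.toReal : ℝ) : EReal) = b := EReal.coe_toReal hb hbot
      refine ⟨b.toReal, ?_, ?_⟩
      · exact_mod_cast hbeq ▸ hab
      · ext x
        rw [hSdef]
        simp only [mem_setOf_eq, mem_Ico]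
        constructor
        · rintro ⟨h1, h2⟩
          refine ⟨h1, ?_⟩
          rw [← hbeq] at h2
          exact_mod_cast h2
        · rintro ⟨h1, h2⟩
          refine ⟨h1, ?_⟩
          rw [← hbeq]
          exact_mod_cast h2
  have hφ'' : ∀ x ∈ interior S, deriv φ x < 0 := by
    intro x hx
    have hxS := interior_subset hx
    refine hφ' x ?_ hxS.2
    rcases hS with h | ⟨b', hb', h⟩
    · rw [h, interior_Ici] at hx; exact hx
    · rw [h, interior_Ico] at hx; exact hx.1
  have hmain := lap_aux2 a S hS φ ψ hψ hψa hφ hφ'' hφ'a hInt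
  have hLne : |deriv φ a| ≠ 0 := by rw [abs_ne_zero]; exact hφ'a.ne
  have hψane : ψ a ≠ 0 := hψa
  have h2 := hmain.mul_const (|deriv φ a| / ψ a)
  have hone : (ψ a / |deriv φ a|) * (|deriv φ a| / ψ a) = 1 := by
    field_simp
  rw [hone] at h2
  refine Tendsto.congr' ?_ h2
  filter_upwards [self_mem_nhdsWithin] with ε hε
  have hεpos : (0:ℝ) < ε := hε
  have hεne : ε ≠ 0 := hεpos.ne'
  have hIeq : ∫ x in S, Real.exp (φ x / ε) * ψ x
      = Real.exp (φ a / ε) * ∫ x in S, Real.exp ((φ x - φ a)/ε) * ψ x := by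
    rw [← MeasureTheory.integral_const_mul]
    congr 1
    funext x
    rw [← mul_assoc, ← Real.exp_add]
    congr 2
    field_simp
    ring
  rw [hIeq]
  have hexpne : Real.exp (φ a / ε) ≠ 0 := (Real.exp_pos _).ne'
  field_simp
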